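/- Fix an integer n ≥ 1 and let B = −Δ_N be (the matrix of) the negative discrete Neumann Laplacian on {0,…,n}, with entries B_{x,y} = ⟨−Δ_N δ_x, δ_y⟩. Then for all x, y ∈ {0,…,n}: δ_{x,y} (B²)_{x,y} − (B_{x,y})² = B_{x,y}. -/
import Mathlib


open Real Matrix

noncomputable section

/-- The matrix of the discrete Neumann Laplacian `Δ_N` on `{0,…,n}`:
`(Δ_N f)_x = f_{x+1} + f_{x−1} − 2 f_x` with the conventions `f_{−1} := f₀`, `f_{n+1} := f_n`. -/
def neumannLapMat (n : ℕ) : Matrix (Fin (n + 1)) (Fin (n + 1)) ℝ := fun x y =>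
  (if (x : ℕ) = n then (if y = x then (1 : ℝ) else 0)
    else (if (y : ℕ) = (x : ℕ) + 1 then 1 else 0))
  + (if (x : ℕ) = 0 then (if y = x then 1 else 0)
    else (if (y : ℕ) + 1 = (x : ℕ) then 1 else 0))
  - 2 * (if y = x then 1 else 0)

lemma Lzero (n : ℕ) (x z : Fin (n+1)) (h1 : (z:ℕ) ≠ x) (h2 : (z:ℕ) ≠ (x:ℕ)+1)
    (h3 : (z:ℕ)+1 ≠ (x:ℕ)) : neumannLapMat n x z = 0 := by
  have hz : z ≠ x := fun hc => h1 (by rw [hc])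
  simp only [neumannLapMat, if_neg hz]
  split_ifs <;> first | omega | contradiction | norm_num

lemma diagsum (n : ℕ) (hn : 1 ≤ n) (x : Fin (n+1)) :
    ∑ z, neumannLapMat n x z * neumannLapMat n z x
      = (neumannLapMat n x x)^2 - neumannLapMat n x x := by
  have hx := x.isLt
  have Lxx : neumannLapMat n x x
      = (if (x:ℕ) = n then (1:ℝ) else 0) + (if (x:ℕ) = 0 then 1 else 0) - 2 := by
    simp only [neumannLapMat, if_pos rfl]
    split_ifs <;> first | omega | contradiction | norm_num
  by_cases h0 : (x:ℕ) = 0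
  · have hxn : (x:ℕ) ≠ n := by omega
    set x1 : Fin (n+1) := ⟨(x:ℕ)+1, by omega⟩ with hx1
    have hne : x ≠ x1 := by simp [Fin.ext_iff, hx1]
    have hsub : ∑ z, neumannLapMat n x z * neumannLapMat n z x
        = ∑ z ∈ ({x, x1} : Finset _), neumannLapMat n x z * neumannLapMat n z x := by
      rw [eq_comm]
      apply Finset.sum_subset (Finset.subset_univ _)
      intro z _ hz
      simp only [Finset.mem_insert, Finset.mem_singleton, not_or] at hz
      rw [Lzero n x z (fun hc => hz.1 (Fin.ext hc))
        (fun hc => hz.2 (Fin.ext (by simp [hx1, hc]))) (by omega), zero_mul]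
    rw [hsub, Finset.sum_pair hne]
    have L1 : neumannLapMat n x x1 = 1 := by
      simp only [neumannLapMat, hx1, Fin.ext_iff, Fin.val_mk]
      split_ifs <;> first | omega | contradiction | norm_num
    have L2 : neumannLapMat n x1 x = 1 := by
      simp only [neumannLapMat, hx1, Fin.ext_iff, Fin.val_mk]
      split_ifs <;> first | omega | contradiction | norm_num
    rw [L1, L2, Lxx, if_pos h0, if_neg hxn]
    norm_num
  · by_cases hxn : (x:ℕ) = n
    · set x1 : Fin (n+1) := ⟨(x:ℕ)-1, by omega⟩ with hx1
      have hne : x1 ≠ x := by simp [Fin.ext_iff, hx1]; omega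
      have hsub : ∑ z, neumannLapMat n x z * neumannLapMat n z x
          = ∑ z ∈ ({x1, x} : Finset _), neumannLapMat n x z * neumannLapMat n z x := by
        rw [eq_comm]
        apply Finset.sum_subset (Finset.subset_univ _)
        intro z _ hz
        simp only [Finset.mem_insert, Finset.mem_singleton, not_or] at hz
        have hz1 : (z:ℕ) ≠ (x:ℕ)-1 := fun hc => hz.1 (Fin.ext (by simp [hx1, hc]))
        rw [Lzero n x z (fun hc => hz.2 (Fin.ext hc)) (by omega) (by omega), zero_mul]
      rw [hsub, Finset.sum_pair hne]
      have L1 : neumannLapMat n x x1 = 1 := by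
        simp only [neumannLapMat, hx1, Fin.ext_iff, Fin.val_mk]
        split_ifs <;> first | omega | contradiction | norm_num
      have L2 : neumannLapMat n x1 x = 1 := by
        simp only [neumannLapMat, hx1, Fin.ext_iff, Fin.val_mk]
        split_ifs <;> first | omega | contradiction | norm_num
      rw [L1, L2, Lxx, if_pos hxn, if_neg h0]
      norm_num
    · set xm : Fin (n+1) := ⟨(x:ℕ)-1, by omega⟩ with hxm
      set xp : Fin (n+1) := ⟨(x:ℕ)+1, by omega⟩ with hxp
      have h1 : xm ≠ x := by simp [Fin.ext_iff, hxm]; omega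
      have h2 : xm ≠ xp := by simp [Fin.ext_iff, hxm, hxp]
      have h3 : x ≠ xp := by simp [Fin.ext_iff, hxp]
      have hsub : ∑ z, neumannLapMat n x z * neumannLapMat n z x
          = ∑ z ∈ ({xm, x, xp} : Finset _), neumannLapMat n x z * neumannLapMat n z x := by
        rw [eq_comm]
        apply Finset.sum_subset (Finset.subset_univ _)
        intro z _ hz
        simp only [Finset.mem_insert, Finset.mem_singleton, not_or] at hz
        have e1 : (z:ℕ) ≠ (x:ℕ)-1 := fun hc => hz.1 (Fin.ext (by simp [hxm, hc]))
        have e2 : (z:ℕ) ≠ (x:ℕ)+1 := fun hc => hz.2.2 (Fin.ext (by simp [hxp, hc]))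
        rw [Lzero n x z (fun hc => hz.2.1 (Fin.ext hc)) e2 (by omega), zero_mul]
      rw [hsub]
      rw [Finset.sum_insert (by simp [h1, h2]), Finset.sum_pair h3]
      have L1 : neumannLapMat n x xm = 1 := by
        simp only [neumannLapMat, hxm, Fin.ext_iff, Fin.val_mk]
        split_ifs <;> first | omega | contradiction | norm_num
      have L2 : neumannLapMat n xm x = 1 := by
        simp only [neumannLapMat, hxm, Fin.ext_iff, Fin.val_mk]
        split_ifs <;> first | omega | contradiction | norm_num
      have L3 : neumannLapMat n x xp = 1 := by
        simp only [neumannLapMat, hxp, Fin.ext_iff, Fin.val_mk]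
        split_ifs <;> first | omega | contradiction | norm_num
      have L4 : neumannLapMat n xp x = 1 := by
        simp only [neumannLapMat, hxp, Fin.ext_iff, Fin.val_mk]
        split_ifs <;> first | omega | contradiction | norm_num
      rw [L1, L2, L3, L4, Lxx, if_neg hxn, if_neg h0]
      norm_num

lemma offdiag (n : ℕ) (x y : Fin (n+1)) (h : x ≠ y) :
    neumannLapMat n x y ^ 2 = neumannLapMat n x y := by
  have h' : y ≠ x := h.symm
  simp only [neumannLapMat, if_neg h']
  split_ifs <;> first | omega | norm_num

/-- For `B = −Δ_N` one has
`δ_{x,y}(B²)_{x,y} − (B_{x,y})² = B_{x,y}` for all `x, y ∈ {0,…,n}`. -/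
theorem negNeumannLap_square_identity (n : ℕ) (hn : 1 ≤ n) (x y : Fin (n + 1)) :
    (if x = y then (1 : ℝ) else 0) * ((-neumannLapMat n) * (-neumannLapMat n)) x y
        - ((-neumannLapMat n) x y) ^ 2
      = (-neumannLapMat n) x y := by
  rcases eq_or_ne x y with rfl | hxy
  · simp only [if_pos rfl, Matrix.mul_apply, Matrix.neg_apply, neg_mul_neg, one_mul]
    rw [diagsum n hn x]
    simp only [if_true]
    ring
  · rw [if_neg hxy, Matrix.neg_apply, zero_mul]
    have := offdiag n x y hxy
    nlinarith [this]

end
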